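/- There is no pure partial plane of order 6 in which exactly one point has degree 7 and every other point has degree belonging to {3, 4, 5}. (Indeed, if such a plane had size s, the counting identities would force the number a_4 of points of degree 4 to equal 50s − s^2 − 637 = −12 − (s−25)^2 < 0, a contradiction.) -/

import Mathlib

/-- A pure partial plane (PPP) of order `n`: a finite collection of distinct lines,
each an `(n+1)`-element subset of a point set of `n^2+n+1` points, such that any two
distinct lines intersect in exactly one point. -/
def IsPPP (n : ℕ) (L : Finset (Finset (Fin (n ^ 2 + n + 1)))) : Prop :=
  (∀ ℓ ∈ L, ℓ.card = n + 1) ∧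
    ∀ ℓ₁ ∈ L, ∀ ℓ₂ ∈ L, ℓ₁ ≠ ℓ₂ → (ℓ₁ ∩ ℓ₂).card = 1

/-- The degree of a point: the number of lines of the collection containing it. -/
def ppDeg {n : ℕ} (L : Finset (Finset (Fin (n ^ 2 + n + 1))))
    (p : Fin (n ^ 2 + n + 1)) : ℕ :=
  (L.filter fun ℓ => p ∈ ℓ).card

/-- There is no pure partial plane of order 6 in which exactly one point has degree 7
and every other point has degree 3, 4 or 5. -/
theorem no_ppp_order_six_one_deg7_rest_345 :
    ¬ ∃ (L : Finset (Finset (Fin (6 ^ 2 + 6 + 1)))) (p₀ : Fin (6 ^ 2 + 6 + 1)),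
        IsPPP 6 L ∧ ppDeg L p₀ = 7 ∧
        ∀ p, p ≠ p₀ → ppDeg L p = 3 ∨ ppDeg L p = 4 ∨ ppDeg L p = 5 := by
  rintro ⟨L, p₀, ⟨hcard, hint⟩, hp₀, hrest⟩
  set s := L.card with hs
  have hs1 : 1 ≤ s := by
    have h7 : (L.filter fun ℓ => p₀ ∈ ℓ).card = 7 := hp₀
    have := Finset.card_filter_le L (fun ℓ => p₀ ∈ ℓ)
    omega
  -- First counting identity
  have E1 : ∑ p, ppDeg L p = 7 * s := by
    have h : ∑ p, ppDeg L p = ∑ ℓ ∈ L, ℓ.card := by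
      simp only [ppDeg, Finset.card_filter]
      rw [Finset.sum_comm]
      refine Finset.sum_congr rfl fun ℓ _ => ?_
      simp [Finset.card_filter]
    rw [h, Finset.sum_congr rfl (fun ℓ hℓ => hcard ℓ hℓ), Finset.sum_const, smul_eq_mul]
    omega
  -- Second counting identity
  have E2 : ∑ p, (ppDeg L p) ^ 2 = s ^ 2 + 6 * s := by
    have h2 : ∀ ℓ₁ ℓ₂ : Finset (Fin (6 ^ 2 + 6 + 1)),
        (ℓ₁ ∩ ℓ₂).card =
          ∑ p, (if p ∈ ℓ₁ then 1 else 0) * (if p ∈ ℓ₂ then 1 else 0) := by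
      intro ℓ₁ ℓ₂
      have hpt : ∀ p : Fin (6 ^ 2 + 6 + 1),
          (if p ∈ ℓ₁ then 1 else 0) * (if p ∈ ℓ₂ then 1 else 0)
            = if p ∈ ℓ₁ ∩ ℓ₂ then 1 else 0 := by
        intro p
        by_cases h1 : p ∈ ℓ₁ <;> by_cases h2 : p ∈ ℓ₂ <;> simp [h1, h2]
      simp_rw [hpt, Finset.sum_ite_mem, Finset.univ_inter, Finset.card_eq_sum_ones]
    have E2a : ∑ p, (ppDeg L p) ^ 2 = ∑ ℓ₁ ∈ L, ∑ ℓ₂ ∈ L, (ℓ₁ ∩ ℓ₂).card := by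
      have h1 : ∀ p : Fin (6 ^ 2 + 6 + 1), (ppDeg L p) ^ 2 =
          ∑ ℓ₁ ∈ L, ∑ ℓ₂ ∈ L, (if p ∈ ℓ₁ then 1 else 0) * (if p ∈ ℓ₂ then 1 else 0) := by
        intro p
        rw [ppDeg, Finset.card_filter, sq, Finset.sum_mul_sum]
      simp_rw [h1, h2]
      rw [Finset.sum_comm]
      refine Finset.sum_congr rfl fun ℓ₁ _ => ?_
      rw [Finset.sum_comm]
    have key : ∀ ℓ₁ ∈ L, ∑ ℓ₂ ∈ L, (ℓ₁ ∩ ℓ₂).card = s + 6 := by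
      intro ℓ₁ h1
      rw [← Finset.add_sum_erase _ _ h1]
      have herase : ∑ ℓ₂ ∈ L.erase ℓ₁, (ℓ₁ ∩ ℓ₂).card = s - 1 := by
        rw [Finset.sum_congr rfl (fun ℓ₂ h2 => hint ℓ₁ h1 ℓ₂ (Finset.mem_of_mem_erase h2)
          (Ne.symm (Finset.ne_of_mem_erase h2)))]
        simp [Finset.card_erase_of_mem h1, hs]
      rw [herase, Finset.inter_self, hcard ℓ₁ h1]
      omega
    rw [E2a, Finset.sum_congr rfl key]
    rw [Finset.sum_const, smul_eq_mul]
    ring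
  -- pass to ℤ
  have B2 : ∑ p, ((ppDeg L p : ℤ) - 3) * ((ppDeg L p : ℤ) - 5)
      = (s : ℤ) ^ 2 - 50 * s + 645 := by
    have expand : ∑ p, ((ppDeg L p : ℤ) - 3) * ((ppDeg L p : ℤ) - 5)
        = (∑ p, (ppDeg L p : ℤ) ^ 2) - 8 * (∑ p, (ppDeg L p : ℤ)) + 15 * 43 := by
      rw [Finset.mul_sum]
      rw [← Finset.sum_sub_distrib]
      have hc : (15 * 43 : ℤ) = ∑ _p : Fin (6 ^ 2 + 6 + 1), (15 : ℤ) := by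
        simp
      rw [hc, ← Finset.sum_add_distrib]
      exact Finset.sum_congr rfl fun p _ => by ring
    have c1 : (∑ p, (ppDeg L p : ℤ)) = 7 * s := by
      rw [← Nat.cast_sum]
      exact_mod_cast congrArg (Nat.cast : ℕ → ℤ) E1
    have c2 : (∑ p, (ppDeg L p : ℤ) ^ 2) = (s : ℤ) ^ 2 + 6 * s := by
      have := congrArg (Nat.cast : ℕ → ℤ) E2
      push_cast at this ⊢
      exact this
    rw [expand, c1, c2]
    ring
  have B1 : ∑ p, ((ppDeg L p : ℤ) - 3) * ((ppDeg L p : ℤ) - 5) ≤ 8 := by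
    rw [← Finset.add_sum_erase _ _ (Finset.mem_univ p₀)]
    have h8 : ((ppDeg L p₀ : ℤ) - 3) * ((ppDeg L p₀ : ℤ) - 5) = 8 := by
      rw [hp₀]; norm_num
    have hnp : ∑ p ∈ Finset.univ.erase p₀, ((ppDeg L p : ℤ) - 3) * ((ppDeg L p : ℤ) - 5) ≤ 0 := by
      apply Finset.sum_nonpos
      intro p hp
      rcases hrest p (Finset.ne_of_mem_erase hp) with h | h | h <;> rw [h] <;> norm_num
    rw [h8]; linarith
  rw [B2] at B1
  nlinarith [sq_nonneg ((s : ℤ) - 25)]
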